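/- Let g_1, …, g_m : ℝ^n → ℝ be continuous convex functions such that the set K = {x ∈ ℝ^n : g_i(x) ≤ 0 for all i} is compact and the set S = {x ∈ ℝ^n : g_i(x) < 0 for all i} is nonempty. Then for every c ∈ ℝ^n and every μ > 0 there exists x̂ ∈ S such that for all x ∈ S, c·x + μ·∑_{i=1}^m ln(−g_i(x)) ≤ c·x̂ + μ·∑_{i=1}^m ln(−g_i(x̂)); that is, the logarithmic barrier problem attains its maximum. -/

import Mathlib

open Matrix Finset

/-- The logarithmic barrier problem attains its maximum on the strict interior
    of a compact convex feasible region. -/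
theorem barrier_max_attained {n m : ℕ}
    (g : Fin m → (Fin n → ℝ) → ℝ)
    (hcont : ∀ i, Continuous (g i))
    (hconv : ∀ i, ConvexOn ℝ Set.univ (g i))
    (hK : IsCompact {x : Fin n → ℝ | ∀ i, g i x ≤ 0})
    (hS : {x : Fin n → ℝ | ∀ i, g i x < 0}.Nonempty)
    (c : Fin n → ℝ) (μ : ℝ) (hμ : 0 < μ) :
    ∃ xstar ∈ {x : Fin n → ℝ | ∀ i, g i x < 0},
      ∀ x ∈ {x : Fin n → ℝ | ∀ i, g i x < 0},
        c ⬝ᵥ x + μ * ∑ i, Real.log (-(g i x)) ≤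
          c ⬝ᵥ xstar + μ * ∑ i, Real.log (-(g i xstar)) := by
  set G : (Fin n → ℝ) → ℝ := fun x => Real.exp (c ⬝ᵥ x / μ) * ∏ i, (-(g i x)) with hG
  have hGcont : Continuous G := by
    apply Continuous.mul
    · have hdot : Continuous fun x : Fin n → ℝ => c ⬝ᵥ x := by
        simp only [dotProduct]
        exact continuous_finset_sum _ fun i _ => continuous_const.mul (continuous_apply i)
      exact (hdot.div_const μ).rexp
    · exact continuous_finset_prod _ fun i _ => (hcont i).neg
  obtain ⟨x0, hx0⟩ := hS
  have hx0K : x0 ∈ {x : Fin n → ℝ | ∀ i, g i x ≤ 0} := fun i => (hx0 i).le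
  obtain ⟨xs, hxsK, hxsmax⟩ := hK.exists_isMaxOn ⟨x0, hx0K⟩ hGcont.continuousOn
  have hGx0 : 0 < G x0 := by
    apply mul_pos (Real.exp_pos _)
    exact Finset.prod_pos fun i _ => neg_pos.mpr (hx0 i)
  have hGxs : 0 < G xs := lt_of_lt_of_le hGx0 (hxsmax hx0K)
  have hxsS : ∀ i, g i xs < 0 := by
    intro i
    rcases lt_or_eq_of_le (hxsK i) with h | h
    · exact h
    · exfalso
      have : (∏ j, (-(g j xs))) = 0 :=
        Finset.prod_eq_zero (Finset.mem_univ i) (by rw [h, neg_zero])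
      rw [hG] at hGxs
      simp only [this, mul_zero] at hGxs
      exact lt_irrefl 0 hGxs
  refine ⟨xs, hxsS, ?_⟩
  intro x hx
  have key : ∀ y : Fin n → ℝ, (∀ i, g i y < 0) →
      c ⬝ᵥ y + μ * ∑ i, Real.log (-(g i y)) = μ * Real.log (G y) := by
    intro y hy
    have hprod : (0:ℝ) < ∏ i, (-(g i y)) :=
      Finset.prod_pos fun i _ => neg_pos.mpr (hy i)
    rw [hG]
    rw [Real.log_mul (Real.exp_ne_zero _) (ne_of_gt hprod), Real.log_exp,
      Real.log_prod (fun i _ => ne_of_gt (neg_pos.mpr (hy i)))]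
    field_simp
  rw [key x hx, key xs hxsS]
  have hGx : 0 < G x := by
    apply mul_pos (Real.exp_pos _)
    exact Finset.prod_pos fun i _ => neg_pos.mpr (hx i)
  have : G x ≤ G xs := hxsmax (fun i => (hx i).le)
  exact mul_le_mul_of_nonneg_left (Real.log_le_log hGx this) hμ.le
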